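/- Let σ be an L_OR sentence. Then PA ⊢ σ if and only if there is an inductive formula φ(x) such that PA⁻ ⊢ ∀x φ(x) ↔ σ. -/

import Mathlib

open FirstOrder Language

/-! ### The language `L_OR = {0, 1, +, ×, <}` of ordered rings -/

/-- Function symbols of the language of ordered rings. -/
inductive LorFunc : ℕ → Type
  | zero : LorFunc 0
  | one : LorFunc 0
  | add : LorFunc 2
  | mul : LorFunc 2

/-- Relation symbols of the language of ordered rings: just `<`. -/
inductive LorRel : ℕ → Type
  | lt : LorRel 2

/-- The first-order language of ordered rings. -/
def Lor : Language := ⟨LorFunc, LorRel⟩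

/-- The term `0`. -/
def zeroT {α : Type} : Lor.Term α := Constants.term LorFunc.zero

/-- The term `1`. -/
def oneT {α : Type} : Lor.Term α := Constants.term LorFunc.one

/-- Addition of terms. -/
def addT {α : Type} (t u : Lor.Term α) : Lor.Term α := Functions.apply₂ LorFunc.add t u

/-- Multiplication of terms. -/
def mulT {α : Type} (t u : Lor.Term α) : Lor.Term α := Functions.apply₂ LorFunc.mul t u

/-- The term `2`, an abbreviation for `1 + 1`. -/
def twoT {α : Type} : Lor.Term α := addT oneT oneT

/-- The numeral `k`, i.e. the closed term `(⋯((0+1)+1)+⋯+1)` with `k` ones. -/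
def numT {α : Type} : ℕ → Lor.Term α
  | 0 => zeroT
  | n + 1 => addT (numT n) oneT

/-- The bounded formula `t < u`. -/
def ltBF {α : Type} {n : ℕ} (t u : Lor.Term (α ⊕ Fin n)) : Lor.BoundedFormula α n :=
  Relations.boundedFormula₂ LorRel.lt t u

/-- The formula `t < u`. -/
def ltFml {α : Type} (t u : Lor.Term α) : Lor.Formula α :=
  Relations.formula₂ LorRel.lt t u

/-- The formula `t ≤ u`, an abbreviation for `t < u ∨ t = u`. -/
def leFml {α : Type} (t u : Lor.Term α) : Lor.Formula α :=
  ltFml t u ⊔ Term.equal t u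

/-! ### The base theory `PA⁻` -/

/-- `PA⁻`, the theory of non-negative parts of discretely ordered rings. -/
def PAminus : Lor.Theory :=
  { -- (P1) associativity of +
    ∀' ∀' ∀' (addT (addT &0 &1) &2 =' addT &0 (addT &1 &2)),
    -- (P2) commutativity of +
    ∀' ∀' (addT &0 &1 =' addT &1 &0),
    -- (P3) associativity of ×
    ∀' ∀' ∀' (mulT (mulT &0 &1) &2 =' mulT &0 (mulT &1 &2)),
    -- (P4) commutativity of ×
    ∀' ∀' (mulT &0 &1 =' mulT &1 &0),
    -- (P5) distributivity
    ∀' ∀' ∀' (mulT &0 (addT &1 &2) =' addT (mulT &0 &1) (mulT &0 &2)),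
    -- (P6) x + 0 = x
    ∀' (addT &0 zeroT =' &0),
    -- (P7) x × 0 = 0
    ∀' (mulT &0 zeroT =' zeroT),
    -- (P8) x × 1 = x
    ∀' (mulT &0 oneT =' &0),
    -- (P9) transitivity of <
    ∀' ∀' ∀' (ltBF &0 &1 ⊓ ltBF &1 &2 ⟹ ltBF &0 &2),
    -- (P10) irreflexivity of <
    ∀' ∼(ltBF &0 &0),
    -- (P11) linearity of <
    ∀' ∀' (ltBF &0 &1 ⊔ &0 =' &1 ⊔ ltBF &1 &0),
    -- (P12) x < y → x + z < y + z
    ∀' ∀' ∀' (ltBF &0 &1 ⟹ ltBF (addT &0 &2) (addT &1 &2)),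
    -- (P13) z ≠ 0 ∧ x < y → x × z < y × z
    ∀' ∀' ∀' (∼(&2 =' zeroT) ⊓ ltBF &0 &1 ⟹ ltBF (mulT &0 &2) (mulT &1 &2)),
    -- (P14) x < y ↔ ∃z ((x + z) + 1 = y)
    ∀' ∀' (ltBF &0 &1 ⇔ ∃' (addT (addT &0 &2) oneT =' &1)),
    -- (P15) 0 < 1 ∧ (x > 0 → x ≥ 1)
    ltBF zeroT oneT ⊓ ∀' (ltBF zeroT &0 ⟹ ltBF oneT &0 ⊔ oneT =' &0),
    -- (P16) x ≥ 0
    ∀' (ltBF zeroT &0 ⊔ zeroT =' &0) }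

/-! ### Formulas `θ(x, z̄)` with a distinguished variable `x` and parameters `z̄`

A formula `θ(x, z̄)` with `m` parameters `z̄` and a distinguished induction
variable `x` is represented as `θ : Lor.Formula (Fin m ⊕ Fin 1)`, where the
`Fin m` component gives the parameters and the `Fin 1` component gives `x`. -/

/-- The distinguished variable `x` as a term. -/
def xT {m : ℕ} : Lor.Term (Fin m ⊕ Fin 1) := Term.var (Sum.inr 0)

/-- `θ(t, z̄)`, where `t` is a term possibly involving `x` and the parameters. -/
def substX {m : ℕ} (θ : Lor.Formula (Fin m ⊕ Fin 1)) (t : Lor.Term (Fin m ⊕ Fin 1)) :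
    Lor.Formula (Fin m ⊕ Fin 1) :=
  θ.subst (Sum.elim (fun i => Term.var (Sum.inl i)) fun _ => t)

/-- `θ(t, z̄)` where `t` is a term in the parameters only. -/
def substP {m : ℕ} (θ : Lor.Formula (Fin m ⊕ Fin 1)) (t : Lor.Term (Fin m)) :
    Lor.Formula (Fin m) :=
  θ.subst (Sum.elim (fun i => Term.var i) fun _ => t)

/-- `∀x θ(x, z̄)`. -/
noncomputable def allX {m : ℕ} (θ : Lor.Formula (Fin m ⊕ Fin 1)) : Lor.Formula (Fin m) :=
  Formula.iAlls (Fin 1) θ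

/-- The universal closure of a formula, as a sentence. -/
noncomputable def closeAll {α : Type} [Finite α] (φ : Lor.Formula α) : Lor.Sentence :=
  Formula.iAlls α (φ.relabel (Sum.inr : α → Empty ⊕ α))

/-- `∀x' < x, θ(x', z̄)`, a formula with free variable `x` (and parameters). -/
noncomputable def allLtX {m : ℕ} (θ : Lor.Formula (Fin m ⊕ Fin 1)) :
    Lor.Formula (Fin m ⊕ Fin 1) :=
  Formula.iAlls (Fin 1)
    (ltFml (Term.var (Sum.inr 0)) (Term.var (Sum.inl (Sum.inr 0))) ⟹
      θ.relabel (Sum.elim (fun i => Sum.inl (Sum.inl i)) fun _ => Sum.inr 0))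

/-- `∀x' ≤ x, θ(x', z̄)`, a formula with free variable `x` (and parameters). -/
noncomputable def allLeX {m : ℕ} (θ : Lor.Formula (Fin m ⊕ Fin 1)) :
    Lor.Formula (Fin m ⊕ Fin 1) :=
  Formula.iAlls (Fin 1)
    (leFml (Term.var (Sum.inr 0)) (Term.var (Sum.inl (Sum.inr 0))) ⟹
      θ.relabel (Sum.elim (fun i => Sum.inl (Sum.inl i)) fun _ => Sum.inr 0))

/-- The conjunction `⋀_{k<j} θ(k, z̄)`. -/
def conjNum {m : ℕ} (θ : Lor.Formula (Fin m ⊕ Fin 1)) : ℕ → Lor.Formula (Fin m)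
  | 0 => ⊤
  | j + 1 => conjNum θ j ⊓ substP θ (numT j)

/-- The conjunction `⋀_{k<j} θ(x+k, z̄)`. -/
def conjShift {m : ℕ} (θ : Lor.Formula (Fin m ⊕ Fin 1)) : ℕ → Lor.Formula (Fin m ⊕ Fin 1)
  | 0 => ⊤
  | j + 1 => conjShift θ j ⊓ substX θ (addT xT (numT j))

/-! ### Induction axioms -/

/-- The induction axiom `I_x θ`:
`∀z̄( θ(0,z̄) ∧ ∀x(θ(x,z̄) → θ(x+1,z̄)) → ∀x θ(x,z̄) )`. -/
noncomputable def indAx {m : ℕ} (θ : Lor.Formula (Fin m ⊕ Fin 1)) : Lor.Sentence :=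
  closeAll ((substP θ zeroT ⊓ allX (θ ⟹ substX θ (addT xT oneT))) ⟹ allX θ)

/-- The `<`-induction axiom `I^<_x θ`:
`∀z̄( ∀y(∀x<y θ(x,z̄) → θ(y,z̄)) → ∀x θ(x,z̄) )`. -/
noncomputable def indLtAx {m : ℕ} (θ : Lor.Formula (Fin m ⊕ Fin 1)) : Lor.Sentence :=
  closeAll (allX (allLtX θ ⟹ θ) ⟹ allX θ)

/-- The `(n+1)`-step induction axiom `I^{(n+1)-step}_x θ`:
`∀z̄( ⋀_{k<n+1} θ(k,z̄) ∧ ∀x(θ(x,z̄) → θ(x+n+1,z̄)) → ∀x θ(x,z̄) )`. -/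
noncomputable def indStepAx {m : ℕ} (n : ℕ) (θ : Lor.Formula (Fin m ⊕ Fin 1)) : Lor.Sentence :=
  closeAll ((conjNum θ (n + 1) ⊓ allX (θ ⟹ substX θ (addT xT (numT (n + 1))))) ⟹ allX θ)

/-- The `(n+1)`-induction axiom `I^{n+1}_x θ`:
`∀z̄( ⋀_{k<n+1} θ(k,z̄) ∧ ∀x(⋀_{k<n+1} θ(x+k,z̄) → θ(x+n+1,z̄)) → ∀x θ(x,z̄) )`. -/
noncomputable def indKAx {m : ℕ} (n : ℕ) (θ : Lor.Formula (Fin m ⊕ Fin 1)) : Lor.Sentence :=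
  closeAll ((conjNum θ (n + 1) ⊓ allX (conjShift θ (n + 1) ⟹ substX θ (addT xT (numT (n + 1))))) ⟹
    allX θ)

/-- The polynomial induction axiom `I^p_x θ`:
`∀z̄( θ(0,z̄) ∧ ∀x(θ(x,z̄) → θ(2x,z̄) ∧ θ(2x+1,z̄)) → ∀x θ(x,z̄) )`, where `2x` is `(1+1)×x`. -/
noncomputable def indPAx {m : ℕ} (θ : Lor.Formula (Fin m ⊕ Fin 1)) : Lor.Sentence :=
  closeAll ((substP θ zeroT ⊓
      allX (θ ⟹ substX θ (mulT twoT xT) ⊓ substX θ (addT (mulT twoT xT) oneT))) ⟹ allX θ)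

/-! ### Theories -/

/-- Peano arithmetic: `PA⁻` plus induction for all `L_OR` formulas. -/
noncomputable def PA : Lor.Theory :=
  PAminus ∪ {σ | ∃ (m : ℕ) (θ : Lor.Formula (Fin m ⊕ Fin 1)), σ = indAx θ}

/-- `IOpen`: `PA⁻` plus induction for all quantifier-free `L_OR` formulas. -/
noncomputable def IOpen : Lor.Theory :=
  PAminus ∪ {σ | ∃ (m : ℕ) (θ : Lor.Formula (Fin m ⊕ Fin 1)), θ.IsQF ∧ σ = indAx θ}

/-! ### Notions of inductiveness

A formula `φ(x)` with exactly one free variable `x` is represented as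
`φ : Lor.Formula (Fin 0 ⊕ Fin 1)` (no parameters). -/

/-- Formulas `φ(x)` with exactly one free variable `x`. -/
abbrev OneVarFormula : Type := Lor.Formula (Fin 0 ⊕ Fin 1)

/-- The sentence `∀x φ(x)`. -/
noncomputable def allS (φ : OneVarFormula) : Lor.Sentence := closeAll (allX φ)

/-- `φ(x)` is inductive: `PA⁻ ⊢ φ(0)` and `PA⁻ ⊢ ∀x(φ(x) → φ(x+1))`. -/
noncomputable def IsInductive (φ : OneVarFormula) : Prop :=
  PAminus ⊨ᵇ closeAll (substP φ zeroT) ∧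
    PAminus ⊨ᵇ closeAll (allX (φ ⟹ substX φ (addT xT oneT)))

/-- `φ(x)` is `<`-inductive: `PA⁻ ⊢ ∀y(∀x<y φ(x) → φ(y))`. -/
noncomputable def IsLtInductive (φ : OneVarFormula) : Prop :=
  PAminus ⊨ᵇ closeAll (allX (allLtX φ ⟹ φ))

/-- `φ(x)` is `(n+1)`-step inductive:
`PA⁻ ⊢ ⋀_{k<n+1} φ(k) ∧ ∀x(φ(x) → φ(x+n+1))`. -/
noncomputable def IsStepInductive (n : ℕ) (φ : OneVarFormula) : Prop :=
  PAminus ⊨ᵇ closeAll (conjNum φ (n + 1) ⊓ allX (φ ⟹ substX φ (addT xT (numT (n + 1)))))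

/-- `φ(x)` is `(n+1)`-inductive:
`PA⁻ ⊢ ⋀_{k<n+1} φ(k) ∧ ∀x(⋀_{k<n+1} φ(x+k) → φ(x+n+1))`. -/
noncomputable def IsKInductive (n : ℕ) (φ : OneVarFormula) : Prop :=
  PAminus ⊨ᵇ
    closeAll (conjNum φ (n + 1) ⊓ allX (conjShift φ (n + 1) ⟹ substX φ (addT xT (numT (n + 1)))))

/-- `φ(x)` is p-inductive (polynomially inductive):
`PA⁻ ⊢ φ(0) ∧ ∀x(φ(x) → φ(2x) ∧ φ(2x+1))`. -/
noncomputable def IsPInductive (φ : OneVarFormula) : Prop :=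
  PAminus ⊨ᵇ closeAll (substP φ zeroT ⊓
    allX (φ ⟹ substX φ (mulT twoT xT) ⊓ substX φ (addT (mulT twoT xT) oneT)))

/-! ### Cuts -/

/-- `φ(x)` is a cut: an inductive formula with `PA⁻ ⊢ ∀x∀y(x<y ∧ φ(y) → φ(x))`. -/
noncomputable def IsCut (φ : OneVarFormula) : Prop :=
  IsInductive φ ∧
    PAminus ⊨ᵇ closeAll
      (ltFml (Term.var (Sum.inr 0) : Lor.Term (Fin 0 ⊕ Fin 2)) (Term.var (Sum.inr 1)) ⊓
          φ.relabel (Sum.elim (fun i => Sum.inl i) fun _ => Sum.inr 1) ⟹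
        φ.relabel (Sum.elim (fun i => Sum.inl i) fun _ => Sum.inr 0))

/-- `φ(x)` is an a-cut: a cut with `PA⁻ ⊢ ∀x(φ(x) → φ(x+x))`. -/
noncomputable def IsACut (φ : OneVarFormula) : Prop :=
  IsCut φ ∧ PAminus ⊨ᵇ closeAll (allX (φ ⟹ substX φ (addT xT xT)))

/-- `φ(x)` is an am-cut: an a-cut with `PA⁻ ⊢ ∀x(φ(x) → φ(x×x))`. -/
noncomputable def IsAMCut (φ : OneVarFormula) : Prop :=
  IsACut φ ∧ PAminus ⊨ᵇ closeAll (allX (φ ⟹ substX φ (mulT xT xT)))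


/-! ### Auxiliary machinery for `stmt3` -/

section Stmt3Aux

open BoundedFormula

variable {M : Type*} [Lor.Structure M]

lemma realize_congr {α : Type} (φ : Lor.Formula α) {v w : α → M} (h : ∀ a, v a = w a) :
    φ.Realize v ↔ φ.Realize w :=
  iff_of_eq (congrArg _ (funext h))

/-- The interpretation of `0` in `M`. -/
def c0 : M := constantMap (L := Lor) (M := M) LorFunc.zero

/-- The interpretation of `1` in `M`. -/
def c1 : M := constantMap (L := Lor) (M := M) LorFunc.one

/-- The interpretation of `+` in `M`. -/
def addM (a b : M) : M := Structure.funMap (L := Lor) LorFunc.add ![a, b]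

@[simp] lemma realize_zeroT {α : Type} (v : α → M) :
    Term.realize v (zeroT : Lor.Term α) = c0 :=
  Term.realize_constants

@[simp] lemma realize_oneT {α : Type} (v : α → M) :
    Term.realize v (oneT : Lor.Term α) = c1 :=
  Term.realize_constants

@[simp] lemma realize_addT {α : Type} (v : α → M) (t u : Lor.Term α) :
    Term.realize v (addT t u) = addM (t.realize v) (u.realize v) :=
  Term.realize_functions_apply₂

@[simp] lemma realize_xT {m : ℕ} (v : Fin m ⊕ Fin 1 → M) :
    Term.realize v (xT : Lor.Term (Fin m ⊕ Fin 1)) = v (Sum.inr 0) := rfl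

lemma sentence_closeAll_iff {α : Type} [Finite α] {φ : Lor.Formula α} :
    (M ⊨ closeAll φ) ↔ ∀ v : α → M, φ.Realize v := by
  rw [closeAll, Sentence.Realize, Formula.realize_iAlls]
  simp only [Formula.realize_relabel]
  exact forall_congr' fun v => realize_congr φ fun a => rfl

lemma realize_allX_iff {m : ℕ} {θ : Lor.Formula (Fin m ⊕ Fin 1)} {v : Fin m → M} :
    (allX θ).Realize v ↔ ∀ x : M, θ.Realize (Sum.elim v fun _ => x) := by
  rw [allX, Formula.realize_iAlls]
  constructor
  · intro h x
    exact (realize_congr θ fun a => rfl).1 (h fun _ => x)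
  · intro h i
    refine (realize_congr θ (v := Sum.elim v fun _ => i 0) fun a => ?_).1 (h (i 0))
    cases a with
    | inl j => rfl
    | inr j => exact congrArg (Sum.elim v i ∘ Sum.inr) (Subsingleton.elim 0 j)

lemma realize_substP_iff {m : ℕ} {θ : Lor.Formula (Fin m ⊕ Fin 1)} {t : Lor.Term (Fin m)}
    {v : Fin m → M} :
    (substP θ t).Realize v ↔ θ.Realize (Sum.elim v fun _ => t.realize v) := by
  rw [substP, Formula.Realize, BoundedFormula.realize_subst]
  exact realize_congr θ fun a => by cases a <;> rfl

lemma realize_substX_iff {m : ℕ} {θ : Lor.Formula (Fin m ⊕ Fin 1)}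
    {t : Lor.Term (Fin m ⊕ Fin 1)} {v : Fin m ⊕ Fin 1 → M} :
    (substX θ t).Realize v ↔
      θ.Realize (Sum.elim (fun i => v (Sum.inl i)) fun _ => t.realize v) := by
  rw [substX, Formula.Realize, BoundedFormula.realize_subst]
  exact realize_congr θ fun a => by cases a <;> rfl

/-- The induction hypothesis `θ(0,z̄) ∧ ∀x(θ(x,z̄) → θ(x+1,z̄))` as a formula in `z̄`. -/
noncomputable def Hyp {m : ℕ} (θ : Lor.Formula (Fin m ⊕ Fin 1)) : Lor.Formula (Fin m) :=
  substP θ zeroT ⊓ allX (θ ⟹ substX θ (addT xT oneT))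

lemma indAx_eq_hyp {m : ℕ} (θ : Lor.Formula (Fin m ⊕ Fin 1)) :
    indAx θ = closeAll (Hyp θ ⟹ allX θ) := rfl

/-- `φ_θ(x) := ∀z̄ (Hyp θ(z̄) → θ(x, z̄))`, a formula with one free variable `x`. -/
noncomputable def phiOf {m : ℕ} (θ : Lor.Formula (Fin m ⊕ Fin 1)) : OneVarFormula :=
  Formula.iAlls (Fin m)
    ((Hyp θ).relabel Sum.inr ⟹
      θ.relabel (Sum.elim (fun i => Sum.inr i) fun _ => Sum.inl (Sum.inr 0)))

lemma realize_phiOf_iff {m : ℕ} {θ : Lor.Formula (Fin m ⊕ Fin 1)} {v : Fin 0 ⊕ Fin 1 → M} :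
    (phiOf θ).Realize v ↔ ∀ zs : Fin m → M,
      (Hyp θ).Realize zs → θ.Realize (Sum.elim zs fun _ => v (Sum.inr 0)) := by
  rw [phiOf, Formula.realize_iAlls]
  refine forall_congr' fun zs => ?_
  rw [Formula.realize_imp, Formula.realize_relabel, Formula.realize_relabel]
  exact imp_congr (realize_congr (Hyp θ) fun i => rfl)
    (realize_congr θ fun a => by cases a <;> rfl)

lemma realize_sentRelabel {σ : Lor.Sentence} {v : Fin 0 ⊕ Fin 1 → M} :
    (σ.relabel (fun e : Empty => e.elim)).Realize v ↔ M ⊨ σ := by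
  rw [Formula.realize_relabel, Sentence.Realize]
  exact realize_congr σ fun e => e.elim

/-- The type of formulas with a distinguished variable and parameters. -/
def FData : Type := Σ m : ℕ, Lor.Formula (Fin m ⊕ Fin 1)

instance : Inhabited FData := ⟨⟨0, ⊤⟩⟩

/-- Conjunction of the `phiOf`s of a list of formulas. -/
noncomputable def conjOf (l : List FData) : OneVarFormula :=
  (l.map fun d => phiOf d.2).foldr (· ⊓ ·) ⊤

lemma realize_conjOf_iff {l : List FData} {v : Fin 0 ⊕ Fin 1 → M} :
    (conjOf l).Realize v ↔ ∀ d ∈ l, (phiOf d.2).Realize v := by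
  rw [conjOf, Formula.Realize, BoundedFormula.realize_foldr_inf]
  simp only [List.mem_map]
  constructor
  · rintro h d hd
    exact h _ ⟨d, hd, rfl⟩
  · rintro h ψ ⟨d, hd, rfl⟩
    exact h d hd

end Stmt3Aux

/-- `PA ⊢ σ` if and only if there is an inductive formula `φ(x)` such that
`PA⁻ ⊢ ∀x φ(x) ↔ σ`. -/
theorem stmt3 (σ : Lor.Sentence) :
    PA ⊨ᵇ σ ↔ ∃ φ : OneVarFormula, IsInductive φ ∧ PAminus ⊨ᵇ (allS φ ⇔ σ) := by
  constructor
  · intro h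
    obtain ⟨T0, hT0sub, hT0⟩ := Theory.models_iff_finset_models.1 h
    classical
    set s : Finset Lor.Sentence := T0.filter (fun τ => τ ∉ PAminus) with hs
    have hschoice : ∀ τ ∈ s, ∃ d : FData, τ = indAx d.2 := by
      intro τ hτ
      rw [hs, Finset.mem_filter] at hτ
      rcases hT0sub hτ.1 with hp | hi
      · exact absurd hp hτ.2
      · obtain ⟨m, θ, rfl⟩ := hi
        exact ⟨⟨m, θ⟩, rfl⟩
    choose! f hf using hschoice
    set l : List FData := s.toList.map f with hl
    -- The key semantic fact coming from compactness
    have KEY : ∀ (N : Type) [Lor.Structure N] [Nonempty N], N ⊨ PAminus →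
        (∀ d ∈ l, N ⊨ indAx d.2) → N ⊨ σ := by
      intro N _ _ hNpa hNind
      haveI : N ⊨ PAminus := hNpa
      haveI : N ⊨ (T0 : Lor.Theory) := by
        rw [Theory.model_iff]
        intro ψ hψ
        by_cases hp : ψ ∈ PAminus
        · exact Theory.realize_sentence_of_mem PAminus hp
        · have hψs : ψ ∈ s := by
            rw [hs, Finset.mem_filter]
            exact ⟨hψ, hp⟩
          have hψeq : ψ = indAx (f ψ).2 := hf ψ hψs
          rw [hψeq]
          exact hNind (f ψ)
            (by rw [hl]; exact List.mem_map.2 ⟨ψ, Finset.mem_toList.2 hψs, rfl⟩)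
      exact hT0.realize_sentence N
    -- The inductive formula
    refine ⟨σ.relabel (fun e : Empty => e.elim) ⊔ conjOf l, ⟨?_, ?_⟩, ?_⟩
    · -- φ(0)
      rw [Theory.models_sentence_iff]
      intro N
      rw [sentence_closeAll_iff]
      intro v
      rw [realize_substP_iff]
      refine Formula.realize_sup.2 (Or.inr (realize_conjOf_iff.2 ?_))
      intro d hd
      rw [realize_phiOf_iff]
      intro zs hH
      have h1 := (Formula.realize_inf.1 hH).1
      rw [realize_substP_iff] at h1
      refine (realize_congr d.2 (v := Sum.elim zs fun _ => Term.realize zs zeroT)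
        fun a => ?_).1 h1
      cases a with
      | inl i => rfl
      | inr j => simp
    · -- φ(x) → φ(x+1)
      rw [Theory.models_sentence_iff]
      intro N
      rw [sentence_closeAll_iff]
      intro v
      rw [realize_allX_iff]
      intro x
      rw [Formula.realize_imp]
      intro hΦ
      rw [realize_substX_iff]
      rcases Formula.realize_sup.1 hΦ with hσ | hc
      · refine Formula.realize_sup.2 (Or.inl ?_)
        rw [realize_sentRelabel] at hσ ⊢
        exact hσ
      · refine Formula.realize_sup.2 (Or.inr ?_)
        rw [realize_conjOf_iff] at hc ⊢
        intro d hd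
        rw [realize_phiOf_iff]
        intro zs hH
        have hx := realize_phiOf_iff.1 (hc d hd) zs hH
        have h2 := realize_allX_iff.1 (Formula.realize_inf.1 hH).2 x
        rw [Formula.realize_imp, realize_substX_iff] at h2
        have h3 := h2 ((realize_congr d.2 fun a => by cases a <;> rfl).1 hx)
        refine (realize_congr d.2 fun a => ?_).1 h3
        cases a with
        | inl i => rfl
        | inr j => simp
    · -- PA⁻ ⊢ ∀x φ(x) ↔ σ
      rw [Theory.models_sentence_iff]
      intro N
      have hiff : ((N : Type) ⊨ (allS (σ.relabel (fun e : Empty => e.elim) ⊔ conjOf l) ⇔ σ)) ↔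
          (((N : Type) ⊨ allS (σ.relabel (fun e : Empty => e.elim) ⊔ conjOf l)) ↔
            ((N : Type) ⊨ σ)) :=
        BoundedFormula.realize_iff
      rw [hiff]
      constructor
      · intro hall
        rw [allS, sentence_closeAll_iff] at hall
        by_contra hσ
        refine hσ (KEY N N.is_model ?_)
        intro d hd
        rw [indAx_eq_hyp, sentence_closeAll_iff]
        intro zs
        rw [Formula.realize_imp, realize_allX_iff]
        intro hH x
        have h1 := realize_allX_iff.1 (hall Fin.elim0) x
        rcases Formula.realize_sup.1 h1 with h2 | h2
        · exact absurd (realize_sentRelabel.1 h2) hσ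
        · have h3 := realize_phiOf_iff.1 (realize_conjOf_iff.1 h2 d hd) zs hH
          exact (realize_congr d.2 fun a => by cases a <;> rfl).1 h3
      · intro hσ
        rw [allS, sentence_closeAll_iff]
        intro v
        rw [realize_allX_iff]
        intro x
        exact Formula.realize_sup.2 (Or.inl (realize_sentRelabel.2 hσ))
  · rintro ⟨φ, ⟨h0, hS⟩, hiff⟩
    rw [Theory.models_sentence_iff]
    intro N
    haveI hNpm : (N : Type) ⊨ PAminus := N.is_model.mono Set.subset_union_left
    have hind : (N : Type) ⊨ indAx φ :=
      Theory.realize_sentence_of_mem PA (Set.mem_union_right _ ⟨0, φ, rfl⟩)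
    have h0' := h0.realize_sentence N
    have hS' := hS.realize_sentence N
    rw [sentence_closeAll_iff] at h0' hS'
    rw [indAx_eq_hyp, sentence_closeAll_iff] at hind
    have hAll : (allX φ).Realize (M := N) Fin.elim0 := by
      have h1 := hind Fin.elim0
      rw [Formula.realize_imp] at h1
      exact h1 (Formula.realize_inf.2 ⟨h0' Fin.elim0, hS' Fin.elim0⟩)
    have hallS : (N : Type) ⊨ allS φ := by
      rw [allS, sentence_closeAll_iff]
      intro v
      have hv : v = Fin.elim0 := funext fun i => i.elim0
      rw [hv]
      exact hAll
    have hiff' := hiff.realize_sentence N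
    exact (BoundedFormula.realize_iff.1 hiff').1 hallS
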